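/- (Uniqueness of the q-factorization.) If S and S′ are finite multisets of pairs (m,a) (m a positive integer, a ∈ ℂˣ), each pairwise in general position, and ∏_{(m,a) ∈ S} π_a^m = ∏_{(m,a) ∈ S′} π_a^m in ℂ[u], then S = S′ as multisets. -/

import Mathlib

open Polynomial

section Helpers
variable {q : ℂ}

/-- power of q with nonzero exponent is not 1 -/
lemma qpow_ne_one (hq0 : q ≠ 0) (hq : ∀ n : ℕ, 1 ≤ n → q ^ n ≠ 1) {d : ℤ} (hd : d ≠ 0) :
    q ^ d ≠ 1 := by
  intro h
  have h1 : q ^ (d.natAbs : ℤ) = 1 := by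
    rcases Int.natAbs_eq d with he | he
    · rw [← he]; exact h
    · rw [show (d.natAbs : ℤ) = -d by omega, zpow_neg, h]; simp
  rw [zpow_natCast] at h1
  exact hq d.natAbs (by omega) h1

lemma qzpow_inj (hq0 : q ≠ 0) (hq : ∀ n : ℕ, 1 ≤ n → q ^ n ≠ 1) {z w : ℤ}
    (h : q ^ z = q ^ w) : z = w := by
  by_contra hne
  apply qpow_ne_one hq0 hq (sub_ne_zero.mpr hne)
  rw [zpow_sub₀ hq0, h, div_self (zpow_ne_zero _ hq0)]

lemma qshift (hq0 : q ≠ 0) {x y : ℂ} {u v : ℤ} (h : q ^ u * x = q ^ v * y) :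
    x = q ^ (v - u) * y := by
  calc x = q ^ (-u) * (q ^ u * x) := by
        rw [← mul_assoc, ← zpow_add₀ hq0]; simp
    _ = q ^ (-u) * (q ^ v * y) := by rw [h]
    _ = q ^ (v - u) * y := by rw [← mul_assoc, ← zpow_add₀ hq0]; ring_nf

end Helpers

noncomputable def qString (q a : ℂ) (m : ℕ) : Polynomial ℂ :=
  ∏ j ∈ Finset.range m,
    (1 - Polynomial.C (q ^ ((m : ℤ) - 2 * ((j : ℤ) + 1) + 1) * a) * Polynomial.X)

noncomputable def qStr (q : ℂ) (p : ℕ × ℂ) : Multiset ℂ :=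
  (Multiset.range p.1).map (fun j : ℕ => q ^ ((p.1 : ℤ) - 1 - 2 * (j : ℤ)) * p.2)

lemma mem_qStr {q : ℂ} {p : ℕ × ℂ} {x : ℂ} :
    x ∈ qStr q p ↔ ∃ j : ℕ, j < p.1 ∧ x = q ^ ((p.1 : ℤ) - 1 - 2 * (j : ℤ)) * p.2 := by
  simp [qStr, Multiset.mem_map, Multiset.mem_range, eq_comm]

lemma qStr_ne_zero {q : ℂ} (hq0 : q ≠ 0) {p : ℕ × ℂ} (hp : p.2 ≠ 0) {x : ℂ}
    (hx : x ∈ qStr q p) : x ≠ 0 := by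
  obtain ⟨j, _, rfl⟩ := mem_qStr.mp hx
  exact mul_ne_zero (zpow_ne_zero _ hq0) hp

noncomputable def lin (c : ℂ) : Polynomial ℂ := 1 - Polynomial.C c * Polynomial.X

lemma lin_ne_zero (c : ℂ) : lin c ≠ 0 := by
  intro h
  have := congrArg (Polynomial.eval 0) h
  simp [lin] at this

lemma roots_lin {c : ℂ} (hc : c ≠ 0) : (lin c).roots = {c⁻¹} := by
  have h : lin c = Polynomial.C (-c) * (Polynomial.X - Polynomial.C c⁻¹) := by
    simp only [lin, map_neg, neg_mul, mul_sub, ← Polynomial.C_mul,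
      mul_inv_cancel₀ hc, map_one]
    ring
  rw [h, Polynomial.roots_C_mul _ (neg_ne_zero.mpr hc), Polynomial.roots_X_sub_C]

lemma prod_lin_inj {C₁ C₂ : Multiset ℂ} (h₁ : ∀ c ∈ C₁, c ≠ 0) (h₂ : ∀ c ∈ C₂, c ≠ 0)
    (h : (C₁.map lin).prod = (C₂.map lin).prod) : C₁ = C₂ := by
  have key : ∀ (C : Multiset ℂ), (∀ c ∈ C, c ≠ 0) →
      ((C.map lin).prod).roots = C.map (·⁻¹) := by
    intro C hC
    rw [Polynomial.roots_multiset_prod _ (by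
      simp only [Multiset.mem_map]
      rintro ⟨c, _, hc⟩
      exact lin_ne_zero c hc)]
    rw [Multiset.bind_map]
    rw [Multiset.bind_congr (fun c hc => roots_lin (hC c hc))]
    exact Multiset.bind_singleton _ _
  have r1 := key C₁ h₁
  have r2 := key C₂ h₂
  rw [h, r2] at r1
  exact Multiset.map_injective inv_injective r1.symm

lemma qString_eq_prod (q a : ℂ) (m : ℕ) :
    qString q a m = ((qStr q (m, a)).map lin).prod := by
  unfold qString qStr
  rw [Multiset.map_map, Finset.prod_eq_multiset_prod, Finset.range_val]
  congr 1
  apply Multiset.map_congr rfl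
  intro j hj
  simp only [Function.comp_apply, lin]
  have he : ((m, a).1 : ℤ) - 1 - 2 * (j : ℤ) = (m : ℤ) - 2 * ((j : ℤ) + 1) + 1 := by
    simp; ring
  rw [he]

def GenPos (q : ℂ) (p₁ p₂ : ℕ × ℂ) : Prop :=
  ∀ s : ℤ, |(p₁.1 : ℤ) - (p₂.1 : ℤ)| + 2 ≤ |s| → |s| ≤ (p₁.1 : ℤ) + (p₂.1 : ℤ) →
    s % 2 = ((p₁.1 : ℤ) + (p₂.1 : ℤ)) % 2 → p₁.2 / p₂.2 ≠ q ^ s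

lemma genPos_symm {q : ℂ} (hq0 : q ≠ 0) {x y : ℕ × ℂ} (hx : x.2 ≠ 0) (hy : y.2 ≠ 0)
    (h : GenPos q x y) : GenPos q y x := by
  intro s h1 h2 h3 heq
  apply h (-s)
  · rwa [abs_neg, abs_sub_comm]
  · rwa [abs_neg, add_comm]
  · rw [Int.neg_emod_two, h3, add_comm]
  · rw [zpow_neg, ← heq, inv_div]

lemma pairwise_genPos {q : ℂ} (hq0 : q ≠ 0) {S : Multiset (ℕ × ℂ)}
    (hnz : ∀ p ∈ S, 1 ≤ p.1 ∧ p.2 ≠ 0) (hp : Multiset.Pairwise (GenPos q) S) :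
    ∀ x ∈ S, ∀ y ∈ S, x ≠ y → GenPos q x y := by
  obtain ⟨l, rfl, hl⟩ := hp
  have hl' : l.Pairwise (fun x y => GenPos q x y ∨ GenPos q y x) :=
    hl.imp (fun h => Or.inl h)
  have hsym : Symmetric (fun x y : ℕ × ℂ => GenPos q x y ∨ GenPos q y x) :=
    fun a b h => h.elim Or.inr Or.inl
  intro x hx y hy hne
  haveI : Std.Symm (fun x y : ℕ × ℂ => GenPos q x y ∨ GenPos q y x) := ⟨fun a b h => hsym h⟩
  rcases hl'.forall (by exact_mod_cast hx) (by exact_mod_cast hy) hne with h | h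
  · exact h
  · exact genPos_symm hq0 (hnz y hy).2 (hnz x hx).2 h

/-- Key per-side lemma: given a maximal element `c` of the multiset of string
parameters, there is a longest string topping at `c`, and the element one step
below its bottom does not occur. -/
lemma side_lemma {q : ℂ} (hq0 : q ≠ 0) (hq : ∀ n : ℕ, 1 ≤ n → q ^ n ≠ 1)
    (X : Multiset (ℕ × ℂ)) (hX : ∀ p ∈ X, 1 ≤ p.1 ∧ p.2 ≠ 0)
    (hXgp : ∀ x ∈ X, ∀ y ∈ X, x ≠ y → GenPos q x y)
    (c : ℂ) (hc0 : c ≠ 0)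
    (hcmax : ∀ t : ℤ, 1 ≤ t → c * q ^ (2 * t) ∉ X.bind (qStr q))
    (hcX : c ∈ X.bind (qStr q)) :
    ∃ m' : ℕ, 1 ≤ m' ∧ (m', c * q ^ (1 - (m' : ℤ))) ∈ X ∧
      (∀ p ∈ X, q ^ ((p.1 : ℤ) - 1) * p.2 = c → p.1 ≤ m') ∧
      c * q ^ (-2 * (m' : ℤ)) ∉ X.bind (qStr q) := by
  -- every string containing c tops at c
  have htop : ∀ p ∈ X, c ∈ qStr q p → q ^ ((p.1 : ℤ) - 1) * p.2 = c := by
    intro p hp hcp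
    obtain ⟨j, hj, hcval⟩ := mem_qStr.mp hcp
    rcases Nat.eq_zero_or_pos j with rfl | hjpos
    · rw [hcval]; norm_num
    · exfalso
      apply hcmax 1 le_rfl
      apply Multiset.mem_bind.mpr ⟨p, hp, ?_⟩
      apply mem_qStr.mpr ⟨j - 1, by omega, ?_⟩
      rw [hcval, mul_right_comm, ← zpow_add₀ hq0]
      congr 2
      omega
  -- the filter of strings topping at c
  set F := X.filter (fun p => q ^ ((p.1 : ℤ) - 1) * p.2 = c) with hF
  have hFne : F ≠ 0 := by
    obtain ⟨p, hp, hcp⟩ := Multiset.mem_bind.mp hcX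
    intro h0
    have : p ∈ F := Multiset.mem_filter.mpr ⟨hp, htop p hp hcp⟩
    rw [h0] at this; exact absurd this (Multiset.notMem_zero p)
  set L := F.map Prod.fst with hL
  have hLne : L.toFinset.Nonempty := by
    obtain ⟨p, hp⟩ := Multiset.exists_mem_of_ne_zero hFne
    exact ⟨p.1, Multiset.mem_toFinset.mpr (Multiset.mem_map_of_mem _ hp)⟩
  set m' := L.toFinset.max' hLne with hm'
  have hbd : ∀ p ∈ X, q ^ ((p.1 : ℤ) - 1) * p.2 = c → p.1 ≤ m' := by
    intro p hp hpc
    apply Finset.le_max'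
    exact Multiset.mem_toFinset.mpr
      (Multiset.mem_map_of_mem _ (Multiset.mem_filter.mpr ⟨hp, hpc⟩))
  obtain ⟨pm, hpmF, hpm1⟩ :=
    Multiset.mem_map.mp (Multiset.mem_toFinset.mp (L.toFinset.max'_mem hLne))
  obtain ⟨hpmX, hpmc⟩ := Multiset.mem_filter.mp hpmF
  have hpm1' : pm.1 = m' := by rw [hpm1, hm']
  have hm'1 : 1 ≤ m' := hpm1' ▸ (hX pm hpmX).1
  have hpm2 : pm.2 = c * q ^ (1 - (m' : ℤ)) := by
    have hqs := qshift hq0 (x := pm.2) (y := c) (u := (pm.1 : ℤ) - 1) (v := 0)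
      (by rw [hpmc]; norm_num)
    rw [hqs, mul_comm]
    congr 2
    omega
  have hpmmem : (m', c * q ^ (1 - (m' : ℤ))) ∈ X := by
    have : pm = (m', c * q ^ (1 - (m' : ℤ))) := Prod.ext hpm1 hpm2
    rwa [← this]
  refine ⟨m', hm'1, hpmmem, hbd, ?_⟩
  -- the crucial non-membership
  intro hmem
  obtain ⟨p, hpX, hep⟩ := Multiset.mem_bind.mp hmem
  obtain ⟨j, hj, hev⟩ := mem_qStr.mp hep
  obtain ⟨r, b⟩ := p
  simp only at hev hj ⊢
  have hr1 : 1 ≤ r := (hX (r, b) hpX).1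
  have hb0 : b ≠ 0 := (hX (r, b) hpX).2
  -- b in terms of c
  have hbval : b = q ^ (-2 * (m' : ℤ) - ((r : ℤ) - 1 - 2 * (j : ℤ))) * c := by
    apply qshift hq0
    rw [← hev, mul_comm c]
  by_cases htopc : q ^ ((r : ℤ) - 1) * b = c
  · -- case A: the string tops at c, so j = m' and r > m', contradicting maximality
    have hrle : r ≤ m' := hbd (r, b) hpX htopc
    have hb2 : b = q ^ (0 - ((r : ℤ) - 1)) * c := by
      apply qshift hq0
      rw [htopc]; norm_num
    have : (-2 * (m' : ℤ) - ((r : ℤ) - 1 - 2 * (j : ℤ))) = 0 - ((r : ℤ) - 1) := by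
      apply qzpow_inj hq0 hq
      have := hbval.symm.trans hb2
      exact mul_right_cancel₀ hc0 this
    omega
  · -- case B: general position violated
    -- top of the string (r,b) : exponent 2*(j - m') relative to c
    have htopval : q ^ ((r : ℤ) - 1) * b = c * q ^ (2 * ((j : ℤ) - (m' : ℤ))) := by
      rw [hbval, ← mul_assoc, ← zpow_add₀ hq0, mul_comm _ c]
      congr 2
      ring
    have hjle : (j : ℤ) ≤ (m' : ℤ) := by
      by_contra hlt
      push_neg at hlt
      apply hcmax ((j : ℤ) - (m' : ℤ)) (by omega)
      apply Multiset.mem_bind.mpr ⟨(r, b), hpX, ?_⟩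
      apply mem_qStr.mpr ⟨0, by omega, ?_⟩
      rw [← htopval]
      congr 2
      push_cast
      ring
    have hjne : (j : ℤ) ≠ (m' : ℤ) := by
      intro h
      apply htopc
      rw [htopval, h]
      simp
    -- set up general position contradiction
    set s : ℤ := 2 * (j : ℤ) - (m' : ℤ) - (r : ℤ) with hs
    have hne : (r, b) ≠ (m', c * q ^ (1 - (m' : ℤ))) := by
      intro h
      apply htopc
      have h1 : r = m' := (Prod.mk.injEq _ _ _ _ ▸ h).1
      have h2 : b = c * q ^ (1 - (m' : ℤ)) := (Prod.mk.injEq _ _ _ _ ▸ h).2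
      rw [h2, h1, mul_comm c, ← mul_assoc, ← zpow_add₀ hq0]
      norm_num
    have hgp := hXgp (r, b) hpX (m', c * q ^ (1 - (m' : ℤ))) hpmmem hne
    apply hgp s ?_ ?_ ?_ ?_
    · -- |r - m'| + 2 ≤ |s|
      rcases abs_cases ((r : ℤ) - (m' : ℤ)) with ⟨e1, he1⟩ | ⟨e1, he1⟩ <;>
        rcases abs_cases s with ⟨e2, he2⟩ | ⟨e2, he2⟩ <;> simp only at * <;> omega
    · rcases abs_cases s with ⟨e2, he2⟩ | ⟨e2, he2⟩ <;> simp only at * <;> omega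
    · simp only
      omega
    · -- b / (c * q^(1-m')) = q ^ s
      simp only
      rw [hbval, div_eq_iff (mul_ne_zero hc0 (zpow_ne_zero _ hq0))]
      rw [mul_comm c (q ^ ((1:ℤ) - (m' : ℤ))), ← mul_assoc, ← zpow_add₀ hq0]
      congr 2
      omega

lemma bind_qStr_eq_zero {q : ℂ} {S : Multiset (ℕ × ℂ)}
    (hS : ∀ p ∈ S, 1 ≤ p.1 ∧ p.2 ≠ 0) (h : S.bind (qStr q) = 0) : S = 0 := by
  by_contra h0
  obtain ⟨p, hp⟩ := Multiset.exists_mem_of_ne_zero h0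
  have hx : q ^ ((p.1 : ℤ) - 1 - 2 * ((0 : ℕ) : ℤ)) * p.2 ∈ qStr q p :=
    mem_qStr.mpr ⟨0, by have := (hS p hp).1; omega, rfl⟩
  have : q ^ ((p.1 : ℤ) - 1 - 2 * ((0 : ℕ) : ℤ)) * p.2 ∈ S.bind (qStr q) :=
    Multiset.mem_bind.mpr ⟨p, hp, hx⟩
  rw [h] at this
  exact absurd this (Multiset.notMem_zero _)

lemma main_induction {q : ℂ} (hq0 : q ≠ 0) (hq : ∀ n : ℕ, 1 ≤ n → q ^ n ≠ 1) :
    ∀ n : ℕ, ∀ S S' : Multiset (ℕ × ℂ), S.card ≤ n →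
    (∀ p ∈ S, 1 ≤ p.1 ∧ p.2 ≠ 0) → (∀ p ∈ S', 1 ≤ p.1 ∧ p.2 ≠ 0) →
    (∀ x ∈ S, ∀ y ∈ S, x ≠ y → GenPos q x y) →
    (∀ x ∈ S', ∀ y ∈ S', x ≠ y → GenPos q x y) →
    S.bind (qStr q) = S'.bind (qStr q) → S = S' := by
  intro n
  induction n with
  | zero =>
    intro S S' hcard hS hS' _ _ hU
    have hS0 : S = 0 := Multiset.card_eq_zero.mp (Nat.le_zero.mp hcard)
    subst hS0
    rw [Multiset.zero_bind] at hU
    exact (bind_qStr_eq_zero hS' hU.symm).symm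
  | succ n IH =>
    intro S S' hcard hS hS' hSgp hS'gp hU
    by_cases hS0 : S = 0
    · subst hS0
      rw [Multiset.zero_bind] at hU
      exact (bind_qStr_eq_zero hS' hU.symm).symm
    -- all elements of the parameter multiset are nonzero
    have hUnz : ∀ x ∈ S.bind (qStr q), x ≠ 0 := by
      intro x hx
      obtain ⟨p, hp, hxp⟩ := Multiset.mem_bind.mp hx
      exact qStr_ne_zero hq0 (hS p hp).2 hxp
    -- pick an element c₀ of the parameter multiset
    obtain ⟨c₀, hc₀U⟩ : ∃ x, x ∈ S.bind (qStr q) := by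
      obtain ⟨p₀, hp₀⟩ := Multiset.exists_mem_of_ne_zero hS0
      exact ⟨_, Multiset.mem_bind.mpr ⟨p₀, hp₀,
        mem_qStr.mpr ⟨0, by have := (hS p₀ hp₀).1; omega, rfl⟩⟩⟩
    have hc₀0 : c₀ ≠ 0 := hUnz c₀ hc₀U
    -- find a maximal shift
    set T : Set ℤ := {z | c₀ * q ^ (2 * z) ∈ S.bind (qStr q)} with hT
    have hT0 : (0 : ℤ) ∈ T := by
      simp only [hT, Set.mem_setOf_eq, mul_zero, zpow_zero, mul_one]
      exact hc₀U
    have hTfin : T.Finite := by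
      have heq : T = (fun z : ℤ => c₀ * q ^ (2 * z)) ⁻¹' {x | x ∈ S.bind (qStr q)} := rfl
      rw [heq]
      apply Set.Finite.preimage
      · intro z _ w _ h
        have := mul_left_cancel₀ hc₀0 h
        have := qzpow_inj hq0 hq this
        omega
      · exact Multiset.finite_toSet _
    obtain ⟨zm, hzmT, hzmax⟩ := hTfin.exists_maximalFor id T ⟨0, hT0⟩
    obtain ⟨c, hc⟩ : ∃ x, x = c₀ * q ^ (2 * zm) := ⟨_, rfl⟩
    have hcU : c ∈ S.bind (qStr q) := by rw [hc]; exact hzmT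
    have hc0 : c ≠ 0 := hUnz c hcU
    have hcmax : ∀ t : ℤ, 1 ≤ t → c * q ^ (2 * t) ∉ S.bind (qStr q) := by
      intro t ht hmem
      have hmem' : zm + t ∈ T := by
        simp only [hT, Set.mem_setOf_eq]
        have heqq : c₀ * q ^ (2 * (zm + t)) = c * q ^ (2 * t) := by
          rw [hc, mul_assoc, ← zpow_add₀ hq0]
          congr 2
          ring
        rwa [heqq]
      have := hzmax hmem' (by simp only [id]; omega)
      simp only [id] at this
      omega
    have hcmax' : ∀ t : ℤ, 1 ≤ t → c * q ^ (2 * t) ∉ S'.bind (qStr q) := by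
      rw [← hU]; exact hcmax
    have hcU' : c ∈ S'.bind (qStr q) := hU ▸ hcU
    -- apply the side lemma to both sides
    obtain ⟨m1, hm1, hp1X, hbd1, hnot1⟩ :=
      side_lemma hq0 hq S hS hSgp c hc0 hcmax hcU
    obtain ⟨m2, hm2, hp2X, hbd2, hnot2⟩ :=
      side_lemma hq0 hq S' hS' hS'gp c hc0 hcmax' hcU'
    -- membership of deep elements in max strings
    have hdeep : ∀ (m k : ℕ), k < m →
        c * q ^ (-2 * (k : ℤ)) ∈ qStr q (m, c * q ^ (1 - (m : ℤ))) := by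
      intro m k hkm
      apply mem_qStr.mpr ⟨k, hkm, ?_⟩
      show c * q ^ (-2 * (k : ℤ)) = q ^ ((m : ℤ) - 1 - 2 * (k : ℤ)) * (c * q ^ (1 - (m : ℤ)))
      rw [mul_comm c (q ^ ((1:ℤ) - (m:ℤ))), ← mul_assoc, ← zpow_add₀ hq0, mul_comm]
      congr 2
      ring
    have hmm : m1 = m2 := by
      by_contra hne
      rcases Nat.lt_or_ge m1 m2 with hlt | hge
      · apply hnot1
        rw [hU]
        exact Multiset.mem_bind.mpr ⟨_, hp2X, hdeep m2 m1 hlt⟩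
      · have hlt : m2 < m1 := by omega
        apply hnot2
        rw [← hU]
        exact Multiset.mem_bind.mpr ⟨_, hp1X, hdeep m1 m2 hlt⟩
    subst hmm
    -- remove the common string and recurse
    obtain ⟨S₁, rfl⟩ := Multiset.exists_cons_of_mem hp1X
    obtain ⟨S₁', rfl⟩ := Multiset.exists_cons_of_mem hp2X
    rw [Multiset.cons_bind, Multiset.cons_bind] at hU
    have hU₁ : S₁.bind (qStr q) = S₁'.bind (qStr q) := add_left_cancel hU
    have hrec : S₁ = S₁' := by
      apply IH S₁ S₁'
      · have := hcard
        rw [Multiset.card_cons] at this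
        omega
      · intro p hp; exact hS p (Multiset.mem_cons_of_mem hp)
      · intro p hp; exact hS' p (Multiset.mem_cons_of_mem hp)
      · intro x hx y hy hxy
        exact hSgp x (Multiset.mem_cons_of_mem hx) y (Multiset.mem_cons_of_mem hy) hxy
      · intro x hx y hy hxy
        exact hS'gp x (Multiset.mem_cons_of_mem hx) y (Multiset.mem_cons_of_mem hy) hxy
      · exact hU₁
    rw [hrec]

theorem qFactorization_unique
    (q : ℂ) (hq0 : q ≠ 0) (hq : ∀ n : ℕ, 1 ≤ n → q ^ n ≠ 1)
    (S S' : Multiset (ℕ × ℂ))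
    (hS : ∀ p ∈ S, 1 ≤ p.1 ∧ p.2 ≠ 0)
    (hS' : ∀ p ∈ S', 1 ≤ p.1 ∧ p.2 ≠ 0)
    (hSgp : Multiset.Pairwise (GenPos q) S)
    (hS'gp : Multiset.Pairwise (GenPos q) S')
    (hprod : (S.map fun p => qString q p.2 p.1).prod
        = (S'.map fun p => qString q p.2 p.1).prod) :
    S = S' := by
  -- Step 1: reduce the polynomial identity to equality of parameter multisets
  have hstep : ∀ X : Multiset (ℕ × ℂ),
      (X.map fun p => qString q p.2 p.1).prod = (((X.bind (qStr q))).map lin).prod := by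
    intro X
    rw [Multiset.map_bind, Multiset.prod_bind]
    congr 1
    apply Multiset.map_congr rfl
    intro p hp
    rw [qString_eq_prod]
  rw [hstep, hstep] at hprod
  have hbind : S.bind (qStr q) = S'.bind (qStr q) := by
    apply prod_lin_inj ?_ ?_ hprod
    · intro x hx
      obtain ⟨p, hp, hxp⟩ := Multiset.mem_bind.mp hx
      exact qStr_ne_zero hq0 (hS p hp).2 hxp
    · intro x hx
      obtain ⟨p, hp, hxp⟩ := Multiset.mem_bind.mp hx
      exact qStr_ne_zero hq0 (hS' p hp).2 hxp
  exact main_induction hq0 hq S.card S S' le_rfl hS hS'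
    (pairwise_genPos hq0 hS hSgp) (pairwise_genPos hq0 hS' hS'gp) hbind
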